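/- Suppose a group G acts on a set X such that every nontrivial element fixes at most 2 points, and let a, u, v be pairwise distinct points. Then the subgroup Stab_G(a) ∩ Stab_G({u,v}) (point stabilizer of a intersected with the setwise stabilizer of {u,v}) has order at most 2. -/
import Mathlib


open Pointwise

/-- If every nontrivial element of `G` fixes at most 2 points of `X`, and `a, u, v` are
pairwise distinct, then `Stab(a) ∩ Stab({u,v})` has order at most 2. -/
theorem stabilizer_inter_setwise_card_le_two
    {G X : Type*} [Group G] [MulAction G X]
    (hfix : ∀ g : G, g ≠ 1 → ∀ x y z : X, g • x = x → g • y = y → g • z = z →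
      x = y ∨ x = z ∨ y = z)
    (a u v : X) (hau : a ≠ u) (hav : a ≠ v) (huv : u ≠ v) :
    Nat.card (MulAction.stabilizer G a ⊓ MulAction.stabilizer G ({u, v} : Set X) :
      Subgroup G) ≤ 2 := by
  classical
  set I := MulAction.stabilizer G a ⊓ MulAction.stabilizer G ({u, v} : Set X) with hIdef
  have memset : ∀ g : G, g ∈ MulAction.stabilizer G ({u, v} : Set X) →
      g • u = u ∨ g • u = v := by
    intro g hg
    have h : g • ({u, v} : Set X) = {u, v} := MulAction.mem_stabilizer_iff.mp hg
    have : g • u ∈ ({u, v} : Set X) := by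
      rw [← h]; exact Set.smul_mem_smul_set (by simp)
    simpa using this
  have memsetv : ∀ g : G, g ∈ MulAction.stabilizer G ({u, v} : Set X) →
      g • v = u ∨ g • v = v := by
    intro g hg
    have h : g • ({u, v} : Set X) = {u, v} := MulAction.mem_stabilizer_iff.mp hg
    have : g • v ∈ ({u, v} : Set X) := by
      rw [← h]; exact Set.smul_mem_smul_set (by simp)
    simpa using this
  have key : ∀ g : G, g ∈ I → g • u = u → g = 1 := by
    intro g hg hu
    obtain ⟨ha, hs⟩ := hg
    by_contra hne
    rcases memsetv g hs with hv | hv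
    · exact huv (smul_left_cancel g (by rw [hu, hv])).symm
    · rcases hfix g hne a u v (MulAction.mem_stabilizer_iff.mp ha) hu hv with h | h | h
      exacts [hau h, hav h, huv h]
  have inj : Function.Injective (fun g : I => decide (g.1 • u = u)) := by
    intro g h hgh
    simp only [decide_eq_decide] at hgh
    have hk : (g⁻¹ * h : I).1 • u = u := by
      rcases memset g.1 g.2.2 with hgu | hgu
      · have hhu : h.1 • u = u := hgh.mp hgu
        show (g.1⁻¹ * h.1) • u = u
        rw [mul_smul, hhu]; exact inv_smul_eq_iff.mpr hgu.symm
      · have hgune : g.1 • u ≠ u := by rw [hgu]; exact huv.symm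
        have hhune : h.1 • u ≠ u := fun hh => hgune (hgh.mpr hh)
        have hhu : h.1 • u = v := (memset h.1 h.2.2).resolve_left hhune
        show (g.1⁻¹ * h.1) • u = u
        rw [mul_smul, hhu]; exact inv_smul_eq_iff.mpr hgu.symm
    have h1 : (g⁻¹ * h : I) = 1 := Subtype.ext (key _ (g⁻¹ * h).2 hk)
    exact (eq_of_inv_mul_eq_one h1).symm ▸ rfl
  calc Nat.card I ≤ Nat.card Bool := Nat.card_le_card_of_injective _ inj
    _ = 2 := by simp
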